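/- For every n ≥ 5, the maximum number of triples in a triple system on n vertices that is A⁺-free and B⁺-free equals C(n−1, 2), i.e. ex(n, A⁺B⁺) = (n−1)(n−2)/2. Moreover, a triple system on n vertices that is A⁺-free and B⁺-free and has exactly C(n−1, 2) triples must be a full star, i.e. there is a vertex x such that F consists of all 3-element subsets of the vertex set containing x. -/

import Mathlib

/-- A triple system: a family of 3-element subsets of the vertex type. -/
def isTripleSystem {V : Type*} (F : Finset (Finset V)) : Prop :=
  ∀ t ∈ F, t.card = 3

/-- `F` contains the configuration described by `pattern` (a list of triples on `Fin m`)
if there is an injection of `Fin m` into the vertex set mapping each triple of the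
pattern to a member of `F`. -/
def containsConfig {V : Type*} [DecidableEq V] {m : ℕ}
    (F : Finset (Finset V)) (pattern : List (Finset (Fin m))) : Prop :=
  ∃ f : Fin m → V, Function.Injective f ∧ ∀ t ∈ pattern, t.image f ∈ F

/-- Configuration A: triples {1,2,4},{1,3,5},{2,3,6} on 6 vertices (0-indexed). -/
def configA : List (Finset (Fin 6)) := [{0,1,3}, {0,2,4}, {1,2,5}]

/-- Configuration B: triples {1,2,5},{1,3,4},{2,3,4} on 5 vertices (0-indexed). -/
def configB : List (Finset (Fin 5)) := [{0,1,4}, {0,2,3}, {1,2,3}]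

/-- Configuration C: triples {1,2,4},{1,3,4},{2,3,4} on 4 vertices (0-indexed). -/
def configC : List (Finset (Fin 4)) := [{0,1,3}, {0,2,3}, {1,2,3}]

/-- Configuration D: triples {1,2,3},{1,3,4},{2,3,5} on 5 vertices (0-indexed). -/
def configD : List (Finset (Fin 5)) := [{0,1,2}, {0,2,3}, {1,2,4}]


/-- Configuration A+: triples 123, 124, 135, 236 on 6 vertices (0-indexed). -/
def configAp : List (Finset (Fin 6)) := [{0,1,2}, {0,1,3}, {0,2,4}, {1,2,5}]

/-- Configuration B+: triples 123, 125, 134, 234 on 5 vertices (0-indexed). -/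
def configBp : List (Finset (Fin 5)) := [{0,1,2}, {0,1,4}, {0,2,3}, {1,2,3}]

open Finset


set_option maxHeartbeats 1000000

variable {n : ℕ}

/-- link of a pair -/
def lk (F : Finset (Finset (Fin n))) (p : Finset (Fin n)) : Finset (Fin n) :=
  Finset.univ.filter (fun v => v ∉ p ∧ insert v p ∈ F)

lemma mem_lk {F : Finset (Finset (Fin n))} {p : Finset (Fin n)} {v : Fin n} :
    v ∈ lk F p ↔ v ∉ p ∧ insert v p ∈ F := by simp [lk]

lemma buildBp {F : Finset (Finset (Fin n))} {p q r d e : Fin n}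
    (h12 : p≠q) (h13 : p≠r) (h23 : q≠r)
    (hd : d ∉ ({p,q,r}:Finset (Fin n))) (he : e ∉ ({p,q,r}:Finset (Fin n))) (hde : d ≠ e)
    (t1 : ({p,q,r}:Finset (Fin n)) ∈ F) (t2 : ({p,q,e}:Finset (Fin n)) ∈ F)
    (t3 : ({p,r,d}:Finset (Fin n)) ∈ F) (t4 : ({q,r,d}:Finset (Fin n)) ∈ F) :
    containsConfig F configBp := by
  simp only [mem_insert, mem_singleton, not_or] at hd he
  refine ⟨fun i => if i.val = 0 then p else if i.val = 1 then q else if i.val = 2 then r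
    else if i.val = 3 then d else e, ?_, ?_⟩
  · intro i j h
    fin_cases i <;> fin_cases j <;> simp_all
  · intro t ht
    simp only [configBp] at ht
    fin_cases ht <;> simp [Finset.image_insert] <;> assumption

lemma buildAp {F : Finset (Finset (Fin n))} {p q r x y z : Fin n}
    (h12 : p≠q) (h13 : p≠r) (h23 : q≠r)
    (hx : x ∉ ({p,q,r}:Finset (Fin n))) (hy : y ∉ ({p,q,r}:Finset (Fin n)))
    (hz : z ∉ ({p,q,r}:Finset (Fin n)))
    (hxy : x ≠ y) (hxz : x ≠ z) (hyz : y ≠ z)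
    (t1 : ({p,q,r}:Finset (Fin n)) ∈ F) (t2 : ({p,q,x}:Finset (Fin n)) ∈ F)
    (t3 : ({p,r,y}:Finset (Fin n)) ∈ F) (t4 : ({q,r,z}:Finset (Fin n)) ∈ F) :
    containsConfig F configAp := by
  simp only [mem_insert, mem_singleton, not_or] at hx hy hz
  refine ⟨fun i => if i.val = 0 then p else if i.val = 1 then q else if i.val = 2 then r
    else if i.val = 3 then x else if i.val = 4 then y else z, ?_, ?_⟩
  · intro i j h
    fin_cases i <;> fin_cases j <;> simp_all
  · intro t ht
    simp only [configAp] at ht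
    fin_cases ht <;> simp [Finset.image_insert] <;> assumption

lemma lk_pair_mem {F : Finset (Finset (Fin n))} {a b v : Fin n} :
    v ∈ lk F {a,b} ↔ (v ≠ a ∧ v ≠ b) ∧ ({a,b,v} : Finset (Fin n)) ∈ F := by
  rw [mem_lk, show insert v ({a,b} : Finset (Fin n)) = {a,b,v} from by ext w; simp; tauto]
  simp

lemma core {F : Finset (Finset (Fin n))}
    (hA : ¬ containsConfig F configAp) (hB : ¬ containsConfig F configBp)
    {a b c : Fin n} (hab : a ≠ b) (hac : a ≠ c) (hbc : b ≠ c)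
    (hT : ({a,b,c} : Finset (Fin n)) ∈ F)
    (h1 : ((lk F {a,b}) \ {c}).Nonempty)
    (h2 : ((lk F {a,c}) \ {b}).Nonempty)
    (h3 : ((lk F {b,c}) \ {a}).Nonempty) :
    ∃ d, (d ≠ a ∧ d ≠ b ∧ d ≠ c) ∧
      lk F {a,b} = {c,d} ∧ lk F {a,c} = {b,d} ∧ lk F {b,c} = {a,d} := by
  have key : ∀ x ∈ (lk F {a,b}) \ {c}, ∀ y ∈ (lk F {a,c}) \ {b},
      ∀ z ∈ (lk F {b,c}) \ {a}, x = y ∧ x = z := by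
    intro x hx y hy z hz
    rw [mem_sdiff, lk_pair_mem, mem_singleton] at hx hy hz
    obtain ⟨⟨⟨hxa, hxb⟩, hxF⟩, hxc⟩ := hx
    obtain ⟨⟨⟨hya, hyc⟩, hyF⟩, hyb⟩ := hy
    obtain ⟨⟨⟨hzb, hzc⟩, hzF⟩, hza⟩ := hz
    by_contra hcon
    by_cases hxy : x = y
    · -- x = y, so x ≠ z; B+ on base (b,c,a) with d = x, e = z
      subst hxy
      have hxz : x ≠ z := fun h => hcon ⟨rfl, h⟩
      exact hB (buildBp hbc (Ne.symm hab) (Ne.symm hac)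
        (by simp [hxb, hxc, hxa]) (by simp [hzb, hzc, hza]) hxz
        ((by ext w; simp; tauto : ({b,c,a}:Finset (Fin n)) = {a,b,c}) ▸ hT)
        hzF
        ((by ext w; simp; tauto : ({b,a,x}:Finset (Fin n)) = {a,b,x}) ▸ hxF)
        ((by ext w; simp; tauto : ({c,a,x}:Finset (Fin n)) = {a,c,x}) ▸ hyF))
    · by_cases hxz : x = z
      · -- x = z, x ≠ y; B+ on base (a,c,b) with d = x, e = y
        subst hxz
        exact hB (buildBp hac hab (Ne.symm hbc)
          (by simp [hxa, hxb, hxc]) (by simp [hya, hyb, hyc]) hxy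
          ((by ext w; simp; tauto : ({a,c,b}:Finset (Fin n)) = {a,b,c}) ▸ hT)
          hyF
          hxF
          ((by ext w; simp; tauto : ({c,b,x}:Finset (Fin n)) = {b,c,x}) ▸ hzF))
      · by_cases hyz : y = z
        · -- y = z, x ≠ y; B+ on base (a,b,c) with d = y, e = x
          subst hyz
          exact hB (buildBp hab hac hbc
            (by simp [hya, hyb, hyc]) (by simp [hxa, hxb, hxc]) (fun h => hxy h.symm)
            hT hxF hyF hzF)
        · -- all distinct: A+
          exact hA (buildAp hab hac hbc
            (by simp [hxa, hxb, hxc]) (by simp [hya, hyb, hyc]) (by simp [hza, hzb, hzc])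
            hxy hxz hyz hT hxF hyF hzF)
  obtain ⟨x0, hx0⟩ := h1
  obtain ⟨y0, hy0⟩ := h2
  obtain ⟨z0, hz0⟩ := h3
  obtain ⟨hxy0, hxz0⟩ := key x0 hx0 y0 hy0 z0 hz0
  have hcmem : c ∈ lk F {a,b} := lk_pair_mem.mpr ⟨⟨Ne.symm hac, Ne.symm hbc⟩, hT⟩
  have hbmem : b ∈ lk F {a,c} := lk_pair_mem.mpr
    ⟨⟨Ne.symm hab, hbc⟩, (by ext w; simp; tauto : ({a,c,b}:Finset (Fin n)) = {a,b,c}) ▸ hT⟩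
  have hamem : a ∈ lk F {b,c} := lk_pair_mem.mpr
    ⟨⟨hab, hac⟩, (by ext w; simp; tauto : ({b,c,a}:Finset (Fin n)) = {a,b,c}) ▸ hT⟩
  have hx0l := (mem_sdiff.mp hx0).1
  have hy0l : x0 ∈ lk F {a,c} := hxy0 ▸ (mem_sdiff.mp hy0).1
  have hz0l : x0 ∈ lk F {b,c} := hxz0 ▸ (mem_sdiff.mp hz0).1
  have hd := (lk_pair_mem.mp hx0l).1
  have hdc : x0 ≠ c := by simpa using (mem_sdiff.mp hx0).2
  refine ⟨x0, ⟨hd.1, hd.2, hdc⟩, ?_, ?_, ?_⟩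
  · apply Finset.Subset.antisymm
    · intro v hv
      rcases eq_or_ne v c with h | h
      · simp [h]
      · have := key v (mem_sdiff.mpr ⟨hv, by simpa using h⟩) y0 hy0 z0 hz0
        simp [this.1, ← hxy0]
    · intro v hv
      rcases mem_insert.mp hv with h | h
      · exact h ▸ hcmem
      · exact (mem_singleton.mp h) ▸ hx0l
  · apply Finset.Subset.antisymm
    · intro v hv
      rcases eq_or_ne v b with h | h
      · simp [h]
      · have := (key x0 hx0 v (mem_sdiff.mpr ⟨hv, by simpa using h⟩) z0 hz0).1
        simp [← this]
    · intro v hv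
      rcases mem_insert.mp hv with h | h
      · exact h ▸ hbmem
      · exact (mem_singleton.mp h) ▸ hy0l
  · apply Finset.Subset.antisymm
    · intro v hv
      rcases eq_or_ne v a with h | h
      · simp [h]
      · have := (key x0 hx0 y0 hy0 v (mem_sdiff.mpr ⟨hv, by simpa using h⟩)).2
        simp [← this]
    · intro v hv
      rcases mem_insert.mp hv with h | h
      · exact h ▸ hamem
      · exact (mem_singleton.mp h) ▸ hz0l

def isBlock (F : Finset (Finset (Fin n))) (Q : Finset (Fin n)) : Prop :=
  Q.card = 4 ∧ ∀ p ⊆ Q, p.card = 2 → lk F p = Q \ p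

lemma blockOf {F : Finset (Finset (Fin n))}
    (hA : ¬ containsConfig F configAp) (hB : ¬ containsConfig F configBp)
    {a b c : Fin n} (hab : a ≠ b) (hac : a ≠ c) (hbc : b ≠ c)
    (hT : ({a,b,c} : Finset (Fin n)) ∈ F)
    (h1 : ((lk F {a,b}) \ {c}).Nonempty)
    (h2 : ((lk F {a,c}) \ {b}).Nonempty)
    (h3 : ((lk F {b,c}) \ {a}).Nonempty) :
    ∃ Q, isBlock F Q ∧ ({a,b,c} : Finset (Fin n)) ⊆ Q := by
  obtain ⟨d, ⟨hda, hdb, hdc⟩, Lab, Lac, Lbc⟩ := core hA hB hab hac hbc hT h1 h2 h3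
  -- the three new triples
  have habd : ({a,b,d} : Finset (Fin n)) ∈ F := by
    have : d ∈ lk F {a,b} := by rw [Lab]; simp
    exact (lk_pair_mem.mp this).2
  have hacd : ({a,c,d} : Finset (Fin n)) ∈ F := by
    have : d ∈ lk F {a,c} := by rw [Lac]; simp
    exact (lk_pair_mem.mp this).2
  have hbcd : ({b,c,d} : Finset (Fin n)) ∈ F := by
    have : d ∈ lk F {b,c} := by rw [Lbc]; simp
    exact (lk_pair_mem.mp this).2
  -- apply core to {a,b,d}
  obtain ⟨d₂, ⟨h2a, h2b, h2d⟩, Lab', Lad, Lbd⟩ :=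
    core hA hB hab (Ne.symm hda) (Ne.symm hdb) habd
      ⟨c, by rw [mem_sdiff, Lab]; simp [hdc, Ne.symm hdc]⟩
      ⟨c, by
        rw [mem_sdiff, lk_pair_mem]
        exact ⟨⟨⟨Ne.symm hac, Ne.symm hdc⟩,
          (by ext w; simp; tauto : ({a,d,c}:Finset (Fin n)) = {a,c,d}) ▸ hacd⟩,
          by simp [Ne.symm hbc]⟩⟩
      ⟨c, by
        rw [mem_sdiff, lk_pair_mem]
        exact ⟨⟨⟨Ne.symm hbc, Ne.symm hdc⟩,
          (by ext w; simp; tauto : ({b,d,c}:Finset (Fin n)) = {b,c,d}) ▸ hbcd⟩,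
          by simp [Ne.symm hac]⟩⟩
  have hd2 : d₂ = c := by
    have : d₂ ∈ ({c,d} : Finset (Fin n)) := by
      rw [← Lab, Lab']; simp
    rcases mem_insert.mp this with h | h
    · exact h
    · exact absurd (mem_singleton.mp h) h2d
  rw [hd2] at Lad Lbd
  -- apply core to {a,c,d}
  obtain ⟨d₃, ⟨h3a, h3c, h3d⟩, Lac', Lad', Lcd⟩ :=
    core hA hB hac (Ne.symm hda) (Ne.symm hdc) hacd
      ⟨b, by rw [mem_sdiff, Lac]; simp [hdb, Ne.symm hdb]⟩
      ⟨b, by rw [mem_sdiff, Lad]; simp [hbc, Ne.symm hab]⟩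
      ⟨b, by
        rw [mem_sdiff, lk_pair_mem]
        exact ⟨⟨⟨hbc, Ne.symm hdb⟩,
          (by ext w; simp; tauto : ({c,d,b}:Finset (Fin n)) = {b,c,d}) ▸ hbcd⟩,
          by simp [Ne.symm hab]⟩⟩
  have hd3 : d₃ = b := by
    have : d₃ ∈ ({b,d} : Finset (Fin n)) := by
      rw [← Lac, Lac']; simp
    rcases mem_insert.mp this with h | h
    · exact h
    · exact absurd (mem_singleton.mp h) h3d
  rw [hd3] at Lcd
  refine ⟨{a,b,c,d}, ⟨?_, ?_⟩, by intro w hw; simp at hw ⊢; tauto⟩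
  · rw [card_insert_of_notMem (by simp [hab, hac, Ne.symm hda]),
      card_insert_of_notMem (by simp [hbc, Ne.symm hdb]),
      card_insert_of_notMem (by simp [Ne.symm hdc]), card_singleton]
  · have Lba : lk F {b,a} = {c,d} := by rw [Finset.pair_comm b a]; exact Lab
    have Lca : lk F {c,a} = {b,d} := by rw [Finset.pair_comm c a]; exact Lac
    have Lcb : lk F {c,b} = {a,d} := by rw [Finset.pair_comm c b]; exact Lbc
    have Lda : lk F {d,a} = {b,c} := by rw [Finset.pair_comm d a]; exact Lad
    have Ldb : lk F {d,b} = {a,c} := by rw [Finset.pair_comm d b]; exact Lbd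
    have Ldc : lk F {d,c} = {a,b} := by rw [Finset.pair_comm d c]; exact Lcd
    intro p hpQ hp2
    obtain ⟨u, v, huv, rfl⟩ := Finset.card_eq_two.mp hp2
    have hu : u ∈ ({a,b,c,d} : Finset (Fin n)) := hpQ (by simp)
    have hv : v ∈ ({a,b,c,d} : Finset (Fin n)) := hpQ (by simp)
    simp only [mem_insert, mem_singleton] at hu hv
    rcases hu with rfl|rfl|rfl|rfl <;> rcases hv with rfl|rfl|rfl|rfl <;>
      first
        | exact absurd rfl huv
        | (rw [Lab]; ext w; simp; aesop)
        | (rw [Lba]; ext w; simp; aesop)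
        | (rw [Lac]; ext w; simp; aesop)
        | (rw [Lca]; ext w; simp; aesop)
        | (rw [Lbc]; ext w; simp; aesop)
        | (rw [Lcb]; ext w; simp; aesop)
        | (rw [Lad]; ext w; simp; aesop)
        | (rw [Lda]; ext w; simp; aesop)
        | (rw [Lbd]; ext w; simp; aesop)
        | (rw [Ldb]; ext w; simp; aesop)
        | (rw [Lcd]; ext w; simp; aesop)
        | (rw [Ldc]; ext w; simp; aesop)

lemma third_vertex {F : Finset (Finset (Fin n))} {T q : Finset (Fin n)}
    (hT3 : T.card = 3) (hTF : T ∈ F) (hq : q ⊆ T) (hq2 : q.card = 2) :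
    ∃ t, t ∈ lk F q ∧ T = insert t q := by
  have hne : (T \ q).Nonempty := by
    rw [← Finset.card_pos, card_sdiff_of_subset hq, hT3, hq2]; norm_num
  obtain ⟨t, ht⟩ := hne
  rw [mem_sdiff] at ht
  have heq : insert t q = T := by
    apply Finset.eq_of_subset_of_card_le
    · exact insert_subset ht.1 hq
    · rw [card_insert_of_notMem ht.2, hq2, hT3]
  exact ⟨t, mem_lk.mpr ⟨ht.2, heq ▸ hTF⟩, heq.symm⟩

lemma uniq_of_lk_one {F : Finset (Finset (Fin n))} {q T T' : Finset (Fin n)}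
    (hq2 : q.card = 2) (hlk : (lk F q).card = 1)
    (hT3 : T.card = 3) (hT'3 : T'.card = 3)
    (hTF : T ∈ F) (hT'F : T' ∈ F) (hqT : q ⊆ T) (hqT' : q ⊆ T') : T = T' := by
  obtain ⟨v, hv⟩ := Finset.card_eq_one.mp hlk
  obtain ⟨t, htl, ht⟩ := third_vertex hT3 hTF hqT hq2
  obtain ⟨t', htl', ht'⟩ := third_vertex hT'3 hT'F hqT' hq2
  rw [hv, mem_singleton] at htl htl'
  rw [ht, ht', htl, htl']

lemma structF {F : Finset (Finset (Fin n))} (hF : isTripleSystem F)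
    (hA : ¬ containsConfig F configAp) (hB : ¬ containsConfig F configBp)
    {T : Finset (Fin n)} (hT : T ∈ F) :
    (∃ p ⊆ T, p.card = 2 ∧ (lk F p).card = 1) ∨ (∃ Q, isBlock F Q ∧ T ⊆ Q) := by
  obtain ⟨a, b, c, hab, hac, hbc, rfl⟩ := Finset.card_eq_three.mp (hF T hT)
  have hcmem : c ∈ lk F {a,b} := lk_pair_mem.mpr ⟨⟨Ne.symm hac, Ne.symm hbc⟩, hT⟩
  have hbmem : b ∈ lk F {a,c} := lk_pair_mem.mpr
    ⟨⟨Ne.symm hab, hbc⟩, (by ext w; simp; tauto : ({a,c,b}:Finset (Fin n)) = {a,b,c}) ▸ hT⟩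
  have hamem : a ∈ lk F {b,c} := lk_pair_mem.mpr
    ⟨⟨hab, hac⟩, (by ext w; simp; tauto : ({b,c,a}:Finset (Fin n)) = {a,b,c}) ▸ hT⟩
  by_cases h1 : ((lk F {a,b}) \ {c}).Nonempty
  · by_cases h2 : ((lk F {a,c}) \ {b}).Nonempty
    · by_cases h3 : ((lk F {b,c}) \ {a}).Nonempty
      · exact Or.inr ((blockOf hA hB hab hac hbc hT h1 h2 h3).imp (fun Q h => ⟨h.1, h.2⟩))
      · refine Or.inl ⟨{b,c}, by intro w hw; simp at hw ⊢; tauto, card_pair hbc, ?_⟩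
        rw [not_nonempty_iff_eq_empty, sdiff_eq_empty_iff_subset] at h3
        rw [Finset.Subset.antisymm h3 (singleton_subset_iff.mpr hamem)]
        exact card_singleton a
    · refine Or.inl ⟨{a,c}, by intro w hw; simp at hw ⊢; tauto, card_pair hac, ?_⟩
      rw [not_nonempty_iff_eq_empty, sdiff_eq_empty_iff_subset] at h2
      rw [Finset.Subset.antisymm h2 (singleton_subset_iff.mpr hbmem)]
      exact card_singleton b
  · refine Or.inl ⟨{a,b}, by intro w hw; simp at hw ⊢; tauto, card_pair hab, ?_⟩
    rw [not_nonempty_iff_eq_empty, sdiff_eq_empty_iff_subset] at h1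
    rw [Finset.Subset.antisymm h1 (singleton_subset_iff.mpr hcmem)]
    exact card_singleton c

lemma two_choose_two (m : ℕ) : 2 * m.choose 2 = m * (m - 1) := by
  induction m with
  | zero => rfl
  | succ m ih =>
    rw [Nat.choose_succ_succ' m 1, Nat.mul_add, ih, Nat.choose_one_right, Nat.add_sub_cancel]
    cases m with
    | zero => rfl
    | succ mm => rw [Nat.succ_sub_one]; ring

lemma arith1 (n z k : ℕ) (hn : 5 ≤ n) (h : n.choose 2 ≤ z + z.choose 2 + 6*k) :
    n - 1 ≤ z + 2*k := by
  by_contra h'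
  push_neg at h'
  have c1 := two_choose_two n
  have c2 := two_choose_two z
  have hd : n*(n-1) ≤ 2*z + z*(z-1) + 12*k := by omega
  have hz1 : z*(z-1) + 2*z = z*(z+1) := by
    cases z with
    | zero => rfl
    | succ zz => rw [Nat.succ_sub_one]; ring
  have hd2 : n*(n-1) ≤ z*(z+1) + 12*k := by omega
  obtain ⟨m, rfl⟩ : ∃ m, n = m + 5 := ⟨n - 5, by omega⟩
  obtain ⟨s, hs⟩ : ∃ s, z + 2*k + s + 1 = m + 4 := ⟨m + 4 - (z + 2*k) - 1, by omega⟩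
  have e5 : m + 5 = z + 2*k + s + 2 := by omega
  have e4 : m + 5 - 1 = z + 2*k + s + 1 := by omega
  rw [e4, e5] at hd2
  cases k with
  | zero => nlinarith [hd2]
  | succ k' =>
    have hm : 3 ≤ z + 2*(k'+1) + s := by omega
    nlinarith [hd2, hm]

lemma arith2 (n z k : ℕ) (hn : 5 ≤ n) (hk7 : 2 ≤ k → 7 ≤ n)
    (he : z + 2*k = n - 1) (h : (n-1).choose 2 ≤ z.choose 2 + 4*k) : k = 0 := by
  by_contra hk
  have hk1 : 1 ≤ k := by omega
  have c1 := two_choose_two (n-1)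
  have c2 := two_choose_two z
  have hd : (n-1)*(n-1-1) ≤ z*(z-1) + 8*k := by omega
  rw [← he] at hd
  have h3 : 3 ≤ z + k := by
    rcases Nat.eq_or_lt_of_le hk1 with h1 | h2
    · omega
    · have := hk7 (by omega); omega
  obtain ⟨t, ht⟩ : ∃ t, z + 2*k = t + 4 := ⟨z + 2*k - 4, by omega⟩
  rw [ht] at hd
  have e1 : t + 4 - 1 = t + 3 := by omega
  rw [e1] at hd
  cases z with
  | zero => nlinarith [hd]
  | succ zz =>
    rw [Nat.succ_sub_one] at hd
    nlinarith [hd, h3]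

lemma block_eq_of_pair {F : Finset (Finset (Fin n))} {Q Q' : Finset (Fin n)}
    (hQ : isBlock F Q) (hQ' : isBlock F Q') (h2 : 2 ≤ (Q ∩ Q').card) : Q = Q' := by
  obtain ⟨p, hp, hp2⟩ := Finset.exists_subset_card_eq h2
  have h1 : lk F p = Q \ p := hQ.2 p (hp.trans inter_subset_left) hp2
  have h2' : lk F p = Q' \ p := hQ'.2 p (hp.trans inter_subset_right) hp2
  have := h1.symm.trans h2'
  calc Q = Q \ p ∪ p := (sdiff_union_of_subset (hp.trans inter_subset_left)).symm
    _ = Q' \ p ∪ p := by rw [← h1, h2']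
    _ = Q' := sdiff_union_of_subset (hp.trans inter_subset_right)

lemma block_triple_mem {F : Finset (Finset (Fin n))} {Q T : Finset (Fin n)}
    (hQ : isBlock F Q) (hTQ : T ⊆ Q) (hT3 : T.card = 3) : T ∈ F := by
  obtain ⟨p, hp, hp2⟩ := Finset.exists_subset_card_eq (show 2 ≤ T.card by omega)
  have hne : (T \ p).Nonempty := by
    rw [← Finset.card_pos, card_sdiff_of_subset hp, hT3, hp2]; norm_num
  obtain ⟨t, ht⟩ := hne
  rw [mem_sdiff] at ht
  have heq : insert t p = T := by
    apply Finset.eq_of_subset_of_card_le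
    · exact insert_subset ht.1 hp
    · rw [card_insert_of_notMem ht.2, hp2, hT3]
  have : t ∈ lk F p := by
    rw [hQ.2 p (hp.trans hTQ) hp2, mem_sdiff]
    exact ⟨hTQ ht.1, ht.2⟩
  rw [← heq]
  exact (mem_lk.mp this).2

lemma helly_pairs {U : Finset (Finset (Fin n))} (hcard : ∀ q ∈ U, q.card = 2)
    (hint : ∀ q ∈ U, ∀ q' ∈ U, q ≠ q' → (q ∩ q').Nonempty) (hU : 4 ≤ U.card) :
    ∃ x, ∀ q ∈ U, x ∈ q := by
  obtain ⟨q1, hq1, q2, hq2, hne⟩ := (Finset.one_lt_card (s := U)).mp (by omega)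
  obtain ⟨x, hx⟩ := hint q1 hq1 q2 hq2 hne
  rw [mem_inter] at hx
  -- q1 = {x, a}, q2 = {x, b}
  obtain ⟨a, ha, haq1⟩ : ∃ a, a ≠ x ∧ q1 = {x, a} := by
    obtain ⟨u, v, huv, h⟩ := Finset.card_eq_two.mp (hcard q1 hq1)
    subst h
    rcases mem_insert.mp hx.1 with rfl | h
    · exact ⟨v, fun e => huv e.symm, rfl⟩
    · rw [mem_singleton] at h; subst h
      exact ⟨u, fun e => huv e, by rw [Finset.pair_comm]⟩
  obtain ⟨b, hb, hbq2⟩ : ∃ b, b ≠ x ∧ q2 = {x, b} := by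
    obtain ⟨u, v, huv, h⟩ := Finset.card_eq_two.mp (hcard q2 hq2)
    subst h
    rcases mem_insert.mp hx.2 with rfl | h
    · exact ⟨v, fun e => huv e.symm, rfl⟩
    · rw [mem_singleton] at h; subst h
      exact ⟨u, fun e => huv e, by rw [Finset.pair_comm]⟩
  have hab : a ≠ b := by
    intro e; subst e; exact hne (by rw [haq1, hbq2])
  refine ⟨x, ?_⟩
  by_contra hcon
  push_neg at hcon
  obtain ⟨q0, hq0, hxq0⟩ := hcon
  have hq0ne1 : q0 ≠ q1 := fun e => hxq0 (e ▸ (haq1 ▸ mem_insert_self x {a}))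
  have hq0ne2 : q0 ≠ q2 := fun e => hxq0 (e ▸ (hbq2 ▸ mem_insert_self x {b}))
  -- q0 = {a, b}
  have haq0 : a ∈ q0 := by
    obtain ⟨w, hw⟩ := hint q0 hq0 q1 hq1 hq0ne1
    rw [mem_inter, haq1, mem_insert, mem_singleton] at hw
    rcases hw.2 with rfl | rfl
    · exact absurd hw.1 hxq0
    · exact hw.1
  have hbq0 : b ∈ q0 := by
    obtain ⟨w, hw⟩ := hint q0 hq0 q2 hq2 hq0ne2
    rw [mem_inter, hbq2, mem_insert, mem_singleton] at hw
    rcases hw.2 with rfl | rfl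
    · exact absurd hw.1 hxq0
    · exact hw.1
  have hq0eq : q0 = {a, b} := by
    symm
    apply Finset.eq_of_subset_of_card_le
    · exact insert_subset haq0 (singleton_subset_iff.mpr hbq0)
    · rw [hcard q0 hq0, card_insert_of_notMem (by simpa using hab), card_singleton]
  -- a fourth set
  have h3le : ({q1, q2, q0} : Finset (Finset (Fin n))).card ≤ 3 :=
    (card_insert_le _ _).trans (Nat.succ_le_succ
      ((card_insert_le _ _).trans (Nat.succ_le_succ (card_singleton q0).le)))
  have hsd : (U \ ({q1, q2, q0} : Finset (Finset (Fin n)))).Nonempty := by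
    rw [← Finset.card_pos]
    have := Finset.le_card_sdiff ({q1, q2, q0} : Finset (Finset (Fin n))) U
    omega
  obtain ⟨q3, hq3'⟩ := hsd
  rw [mem_sdiff] at hq3'
  obtain ⟨hq3U, hq3⟩ := hq3'
  simp only [mem_insert, mem_singleton, not_or] at hq3
  obtain ⟨h31, h32, h30⟩ := hq3
  have hxq3 : x ∈ q3 := by
    by_contra hx3
    -- then q3 = {a,b} = q0 as above
    have haq3 : a ∈ q3 := by
      obtain ⟨w, hw⟩ := hint q3 hq3U q1 hq1 h31
      rw [mem_inter, haq1, mem_insert, mem_singleton] at hw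
      rcases hw.2 with rfl | rfl
      · exact absurd hw.1 hx3
      · exact hw.1
    have hbq3 : b ∈ q3 := by
      obtain ⟨w, hw⟩ := hint q3 hq3U q2 hq2 h32
      rw [mem_inter, hbq2, mem_insert, mem_singleton] at hw
      rcases hw.2 with rfl | rfl
      · exact absurd hw.1 hx3
      · exact hw.1
    have : q3 = {a, b} := by
      symm
      apply Finset.eq_of_subset_of_card_le
      · exact insert_subset haq3 (singleton_subset_iff.mpr hbq3)
      · rw [hcard q3 hq3U, card_insert_of_notMem (by simpa using hab), card_singleton]
    exact h30 (this.trans hq0eq.symm)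
  -- q3 ∋ x and meets q0 = {a,b}
  obtain ⟨w, hw⟩ := hint q3 hq3U q0 hq0 h30
  rw [mem_inter, hq0eq, mem_insert, mem_singleton] at hw
  have hwx : w ≠ x := by
    rcases hw.2 with rfl | rfl
    · exact ha
    · exact hb
  have hq3eq : q3 = {x, w} := by
    symm
    apply Finset.eq_of_subset_of_card_le
    · exact insert_subset hxq3 (singleton_subset_iff.mpr hw.1)
    · rw [hcard q3 hq3U, card_insert_of_notMem (by simpa using fun e => hwx e.symm),
        card_singleton]
  rcases hw.2 with rfl | rfl
  · exact h31 (hq3eq.trans haq1.symm)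
  · exact h32 (hq3eq.trans hbq2.symm)

def fullStar (x : Fin n) : Finset (Finset (Fin n)) :=
  Finset.univ.filter (fun t => t.card = 3 ∧ x ∈ t)

lemma fullStar_card (x : Fin n) (hn : 3 ≤ n) : (fullStar x).card = (n-1).choose 2 := by
  have himg : fullStar x = ((Finset.univ.erase x).powersetCard 2).image (insert x) := by
    ext t
    simp only [fullStar, mem_filter, mem_univ, true_and, mem_image, mem_powersetCard]
    constructor
    · rintro ⟨h3, hx⟩
      refine ⟨t.erase x, ⟨fun w hw => ?_, ?_⟩, ?_⟩
      · simp [Finset.mem_erase.mp hw]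
      · rw [card_erase_of_mem hx, h3]
      · exact insert_erase hx
    · rintro ⟨p, ⟨hp, hp2⟩, rfl⟩
      have hxp : x ∉ p := fun h => (Finset.mem_erase.mp (hp h)).1 rfl
      exact ⟨by rw [card_insert_of_notMem hxp, hp2], mem_insert_self x p⟩
  rw [himg, Finset.card_image_of_injOn, Finset.card_powersetCard, card_erase_of_mem (mem_univ x),
    card_univ, Fintype.card_fin]
  intro p hp q hq h
  rw [mem_coe, mem_powersetCard] at hp hq
  have hxp : x ∉ p := fun hh => (Finset.mem_erase.mp (hp.1 hh)).1 rfl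
  have hxq : x ∉ q := fun hh => (Finset.mem_erase.mp (hq.1 hh)).1 rfl
  rw [← erase_insert hxp, ← erase_insert hxq, h]

lemma fullStar_triple (x : Fin n) : isTripleSystem (fullStar x) := by
  intro t ht
  exact (mem_filter.mp ht).2.1

lemma fullStar_Ap_free (x : Fin n) : ¬ containsConfig (fullStar x) configAp := by
  rintro ⟨f, hinj, hmem⟩
  have h1 := hmem {0,1,2} (by simp [configAp])
  have h2 := hmem {0,1,3} (by simp [configAp])
  have h3 := hmem {0,2,4} (by simp [configAp])
  have h4 := hmem {1,2,5} (by simp [configAp])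
  simp only [fullStar, mem_filter, mem_univ, true_and] at h1 h2 h3 h4
  obtain ⟨i1, hi1, hf1⟩ := Finset.mem_image.mp h1.2
  obtain ⟨i2, hi2, hf2⟩ := Finset.mem_image.mp h2.2
  obtain ⟨i3, hi3, hf3⟩ := Finset.mem_image.mp h3.2
  obtain ⟨i4, hi4, hf4⟩ := Finset.mem_image.mp h4.2
  have e12 : i1 = i2 := hinj (hf1.trans hf2.symm)
  have e13 : i1 = i3 := hinj (hf1.trans hf3.symm)
  have e14 : i1 = i4 := hinj (hf1.trans hf4.symm)
  subst e12; subst e13; subst e14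
  fin_cases hi1 <;> simp_all
lemma fullStar_Bp_free (x : Fin n) : ¬ containsConfig (fullStar x) configBp := by
  rintro ⟨f, hinj, hmem⟩
  have h1 := hmem {0,1,2} (by simp [configBp])
  have h2 := hmem {0,1,4} (by simp [configBp])
  have h3 := hmem {0,2,3} (by simp [configBp])
  have h4 := hmem {1,2,3} (by simp [configBp])
  simp only [fullStar, mem_filter, mem_univ, true_and] at h1 h2 h3 h4
  obtain ⟨i1, hi1, hf1⟩ := Finset.mem_image.mp h1.2
  obtain ⟨i2, hi2, hf2⟩ := Finset.mem_image.mp h2.2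
  obtain ⟨i3, hi3, hf3⟩ := Finset.mem_image.mp h3.2
  obtain ⟨i4, hi4, hf4⟩ := Finset.mem_image.mp h4.2
  have e12 : i1 = i2 := hinj (hf1.trans hf2.symm)
  have e13 : i1 = i3 := hinj (hf1.trans hf3.symm)
  have e14 : i1 = i4 := hinj (hf1.trans hf4.symm)
  subst e12; subst e13; subst e14
  fin_cases hi1 <;> simp_all

lemma main_count (hn : 5 ≤ n) {F : Finset (Finset (Fin n))} (hF : isTripleSystem F)
    (hA : ¬ containsConfig F configAp) (hB : ¬ containsConfig F configBp) :
    F.card ≤ (n-1).choose 2 ∧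
      (F.card = (n-1).choose 2 → ∃ x : Fin n, F = fullStar x) := by
  classical
  set Blocks := Finset.univ.filter (fun Q => isBlock F Q) with hBlocks
  set k := Blocks.card with hkdef
  set Fb := F.filter (fun T => ∃ Q, isBlock F Q ∧ T ⊆ Q) with hFbdef
  set F1 := F.filter (fun T => ¬ ∃ Q, isBlock F Q ∧ T ⊆ Q) with hF1def
  have hmemBlocks : ∀ Q : Finset (Fin n), Q ∈ Blocks ↔ isBlock F Q := by
    intro Q; rw [hBlocks, mem_filter]; simp
  have hsplit : Fb.card + F1.card = F.card :=
    Finset.card_filter_add_card_filter_not (p := fun T => ∃ Q, isBlock F Q ∧ T ⊆ Q)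
  have hT3 : ∀ T ∈ F1, T.card = 3 := fun T hT => hF T (mem_of_mem_filter T hT)
  have hF1struct : ∀ T ∈ F1, ∃ p, p ⊆ T ∧ p.card = 2 ∧ (lk F p).card = 1 := by
    intro T hT
    rw [hF1def, mem_filter] at hT
    rcases structF hF hA hB hT.1 with ⟨p, hp, h2, h1⟩ | hblk
    · exact ⟨p, hp, h2, h1⟩
    · exact absurd hblk hT.2
  -- Fb is the union of block triples
  have hFbeq : Fb = Blocks.biUnion (fun Q => Q.powersetCard 3) := by
    ext T
    rw [hFbdef, mem_filter, mem_biUnion]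
    constructor
    · rintro ⟨hTF, Q, hQ, hTQ⟩
      exact ⟨Q, (hmemBlocks Q).mpr hQ, mem_powersetCard.mpr ⟨hTQ, hF T hTF⟩⟩
    · rintro ⟨Q, hQ, hTQ⟩
      rw [mem_powersetCard] at hTQ
      have hQb := (hmemBlocks Q).mp hQ
      exact ⟨block_triple_mem hQb hTQ.1 hTQ.2, Q, hQb, hTQ.1⟩
  have hFbcard : Fb.card = 4 * k := by
    rw [hFbeq, card_biUnion]
    · rw [Finset.sum_congr rfl (fun Q hQ => by
        rw [card_powersetCard, ((hmemBlocks Q).mp hQ).1]), Finset.sum_const, smul_eq_mul,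
        mul_comm]
      rfl
    · intro Q hQ Q' hQ' hne
      simp only [Function.onFun]; rw [Finset.disjoint_left]
      intro T hT hT'
      rw [mem_powersetCard] at hT hT'
      apply hne
      apply block_eq_of_pair ((hmemBlocks Q).mp hQ) ((hmemBlocks Q').mp hQ')
      have := card_le_card (subset_inter hT.1 hT'.1)
      omega
  -- choice of a degree-one pair for each T ∈ F1
  set φ : Finset (Fin n) → Finset (Fin n) := fun T =>
    if h : ∃ p, p ⊆ T ∧ p.card = 2 ∧ (lk F p).card = 1 then h.choose else ∅ with hφdef
  have hφ : ∀ T ∈ F1, φ T ⊆ T ∧ (φ T).card = 2 ∧ (lk F (φ T)).card = 1 := by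
    intro T hT
    have h := hF1struct T hT
    rw [hφdef]
    simp only [dif_pos h]
    exact h.choose_spec
  have hφinj : Set.InjOn φ F1 := by
    intro T hT T' hT' he
    obtain ⟨hsub, h2, h1⟩ := hφ T hT
    obtain ⟨hsub', h2', h1'⟩ := hφ T' hT'
    rw [← he] at hsub'
    exact uniq_of_lk_one h2 h1 (hT3 T hT) (hT3 T' hT')
      (mem_of_mem_filter T hT) (mem_of_mem_filter T' hT') hsub hsub'
  set chosen := F1.image φ with hchosendef
  have hchosencard : chosen.card = F1.card := card_image_of_injOn hφinj
  set blockPairs := Blocks.biUnion (fun Q => Q.powersetCard 2) with hbpdef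
  have hbpcard : blockPairs.card = 6 * k := by
    rw [hbpdef, card_biUnion]
    · rw [Finset.sum_congr rfl (fun Q hQ => by
        rw [card_powersetCard, ((hmemBlocks Q).mp hQ).1]), Finset.sum_const, smul_eq_mul,
        mul_comm]
      rfl
    · intro Q hQ Q' hQ' hne
      simp only [Function.onFun]; rw [Finset.disjoint_left]
      intro p hp hp'
      rw [mem_powersetCard] at hp hp'
      apply hne
      apply block_eq_of_pair ((hmemBlocks Q).mp hQ) ((hmemBlocks Q').mp hQ')
      have := card_le_card (subset_inter hp.1 hp'.1)
      omega
  set Pairs := (Finset.univ : Finset (Fin n)).powersetCard 2 with hPairsdef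
  have hPairscard : Pairs.card = n.choose 2 := by
    rw [hPairsdef, card_powersetCard, card_univ, Fintype.card_fin]
  have hdisj : Disjoint chosen blockPairs := by
    rw [Finset.disjoint_left]
    intro p hp hpb
    rw [hchosendef, mem_image] at hp
    obtain ⟨T, hT, rfl⟩ := hp
    rw [hbpdef, mem_biUnion] at hpb
    obtain ⟨Q, hQ, hpQ⟩ := hpb
    rw [mem_powersetCard] at hpQ
    have h2 := ((hmemBlocks Q).mp hQ).2 _ hpQ.1 hpQ.2
    have h1 := (hφ T hT).2.2
    rw [h2, card_sdiff_of_subset hpQ.1, ((hmemBlocks Q).mp hQ).1, hpQ.2] at h1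
    omega
  have hsubP : chosen ∪ blockPairs ⊆ Pairs := by
    intro p hp
    rw [mem_union] at hp
    rw [hPairsdef, mem_powersetCard]
    refine ⟨subset_univ p, ?_⟩
    rcases hp with hp | hp
    · rw [hchosendef, mem_image] at hp
      obtain ⟨T, hT, rfl⟩ := hp
      exact (hφ T hT).2.1
    · rw [hbpdef, mem_biUnion] at hp
      obtain ⟨Q, hQ, hpQ⟩ := hp
      exact (mem_powersetCard.mp hpQ).2
  set U := Pairs \ (chosen ∪ blockPairs) with hUdef
  set z := U.card with hzdef
  have hcount : n.choose 2 = z + F1.card + 6 * k := by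
    have h1 : (chosen ∪ blockPairs).card = F1.card + 6*k := by
      rw [card_union_of_disjoint hdisj, hchosencard, hbpcard]
    have h2 : U.card = Pairs.card - (chosen ∪ blockPairs).card := card_sdiff_of_subset hsubP
    have h3 := card_le_card hsubP
    omega
  -- the cherry map
  set Ψ : Finset (Fin n) → Finset (Finset (Fin n)) := fun T =>
    (T.powersetCard 2).erase (φ T) with hΨdef
  have hφmem : ∀ T ∈ F1, φ T ∈ T.powersetCard 2 := fun T hT =>
    mem_powersetCard.mpr ⟨(hφ T hT).1, (hφ T hT).2.1⟩
  have hΨcard : ∀ T ∈ F1, (Ψ T).card = 2 := by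
    intro T hT
    rw [hΨdef]
    simp only []
    rw [card_erase_of_mem (hφmem T hT), card_powersetCard, hT3 T hT]
    rfl
  have hmemΨ : ∀ T ∈ F1, ∀ q ∈ Ψ T, q ⊆ T ∧ q.card = 2 ∧ q ≠ φ T := by
    intro T hT q hq
    rw [hΨdef] at hq
    simp only [mem_erase, mem_powersetCard] at hq
    exact ⟨hq.2.1, hq.2.2, hq.1⟩
  have hΨsubU : ∀ T ∈ F1, Ψ T ⊆ U := by
    intro T hT q hq
    obtain ⟨hqT, hq2, hqne⟩ := hmemΨ T hT q hq
    rw [hUdef, mem_sdiff, mem_union]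
    refine ⟨mem_powersetCard.mpr ⟨subset_univ q, hq2⟩, ?_⟩
    rintro (hc | hbp)
    · rw [hchosendef, mem_image] at hc
      obtain ⟨T'', hT'', heq⟩ := hc
      have hlkq : (lk F q).card = 1 := by rw [← heq]; exact (hφ T'' hT'').2.2
      have hqT'' : q ⊆ T'' := heq ▸ (hφ T'' hT'').1
      have hTT : T = T'' := uniq_of_lk_one hq2 hlkq (hT3 T hT) (hT3 T'' hT'')
        (mem_of_mem_filter T hT) (mem_of_mem_filter T'' hT'') hqT hqT''
      exact hqne (by rw [hTT, heq])
    · rw [hbpdef, mem_biUnion] at hbp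
      obtain ⟨Q, hQ, hqQ⟩ := hbp
      rw [mem_powersetCard] at hqQ
      obtain ⟨t, htl, hTeq⟩ := third_vertex (hT3 T hT) (mem_of_mem_filter T hT) hqT hq2
      have htQ : t ∈ Q \ q := by
        rw [← ((hmemBlocks Q).mp hQ).2 q hqQ.1 hqQ.2]; exact htl
      have hTQ : T ⊆ Q := by
        rw [hTeq]; exact insert_subset (mem_sdiff.mp htQ).1 hqQ.1
      exact (mem_filter.mp hT).2 ⟨Q, (hmemBlocks Q).mp hQ, hTQ⟩
  have hunion : ∀ T ∈ F1, ∀ q1 ∈ Ψ T, ∀ q2 ∈ Ψ T, q1 ≠ q2 → q1 ∪ q2 = T := by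
    intro T hT q1 hq1 q2 hq2 hne
    obtain ⟨h1T, h12, _⟩ := hmemΨ T hT q1 hq1
    obtain ⟨h2T, h22, _⟩ := hmemΨ T hT q2 hq2
    have hintle : (q1 ∩ q2).card ≤ 1 := by
      by_contra hcon
      push_neg at hcon
      have he1 : q1 ∩ q2 = q1 :=
        Finset.eq_of_subset_of_card_le inter_subset_left (by omega)
      have hsub12 : q1 ⊆ q2 := he1 ▸ inter_subset_right
      exact hne (Finset.eq_of_subset_of_card_le hsub12 (by omega))
    have hci := card_union_add_card_inter q1 q2
    apply Finset.eq_of_subset_of_card_le (union_subset h1T h2T)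
    rw [hT3 T hT]
    omega
  have hΨinj : Set.InjOn Ψ F1 := by
    intro T hT T' hT' he
    obtain ⟨q1, q2, hq12, hΨeq⟩ := Finset.card_eq_two.mp (hΨcard T hT)
    have hq1 : q1 ∈ Ψ T := by rw [hΨeq]; simp
    have hq2 : q2 ∈ Ψ T := by rw [hΨeq]; simp
    have hq1' : q1 ∈ Ψ T' := by rw [← he, hΨeq]; simp
    have hq2' : q2 ∈ Ψ T' := by rw [← he, hΨeq]; simp
    rw [← hunion T hT q1 hq1 q2 hq2 hq12, hunion T' hT' q1 hq1' q2 hq2' hq12]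
  have hF1le : F1.card ≤ z.choose 2 := by
    have hmapsto : ∀ T ∈ F1, Ψ T ∈ U.powersetCard 2 := fun T hT =>
      mem_powersetCard.mpr ⟨hΨsubU T hT, hΨcard T hT⟩
    have := Finset.card_le_card_of_injOn Ψ hmapsto hΨinj
    rwa [card_powersetCard] at this
  have hFcard : F.card = F1.card + 4 * k := by omega
  have hnz : n.choose 2 ≤ z + z.choose 2 + 6*k := by omega
  have hzk := arith1 n z k hn hnz
  have hCn : n.choose 2 = (n-1).choose 2 + (n-1) := by
    obtain ⟨m, rfl⟩ : ∃ m, n = m + 1 := ⟨n-1, by omega⟩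
    have h := Nat.choose_succ_succ' m 1
    rw [Nat.choose_one_right] at h
    norm_num at h ⊢
    omega
  have hbound : F.card ≤ (n-1).choose 2 := by omega
  refine ⟨hbound, ?_⟩
  intro heq
  have hzke : z + 2*k = n - 1 := by omega
  have hk7 : 2 ≤ k → 7 ≤ n := by
    intro h2k
    obtain ⟨Q, hQ, Q', hQ', hne⟩ := (Finset.one_lt_card (s := Blocks)).mp (by omega)
    have hQb := (hmemBlocks Q).mp hQ
    have hQ'b := (hmemBlocks Q').mp hQ'
    have hint : (Q ∩ Q').card ≤ 1 := by
      by_contra hcon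
      push_neg at hcon
      exact hne (block_eq_of_pair hQb hQ'b (by omega))
    have hci := card_union_add_card_inter Q Q'
    have hle : (Q ∪ Q').card ≤ n := by
      have := card_le_univ (Q ∪ Q')
      rwa [Fintype.card_fin] at this
    rw [hQb.1, hQ'b.1] at hci
    omega
  have hkz : k = 0 := arith2 n z k hn hk7 hzke (by omega)
  have hzn : U.card = n - 1 := by omega
  have hF1F : F1 = F := Finset.eq_of_subset_of_card_le (filter_subset _ F) (by omega)
  have himgΨ : F1.image Ψ = U.powersetCard 2 := by
    apply Finset.eq_of_subset_of_card_le
    · intro s hs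
      rw [mem_image] at hs
      obtain ⟨T, hT, rfl⟩ := hs
      exact mem_powersetCard.mpr ⟨hΨsubU T hT, hΨcard T hT⟩
    · rw [card_powersetCard, Finset.card_image_of_injOn hΨinj, hzn, hF1F, heq]
  have hUcard2 : ∀ q ∈ U, q.card = 2 := fun q hq =>
    (mem_powersetCard.mp (mem_sdiff.mp hq).1).2
  have hUint : ∀ q ∈ U, ∀ q' ∈ U, q ≠ q' → (q ∩ q').Nonempty := by
    intro q hq q' hq' hne
    have hpair : ({q, q'} : Finset (Finset (Fin n))) ∈ U.powersetCard 2 := by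
      rw [mem_powersetCard]
      refine ⟨insert_subset hq (singleton_subset_iff.mpr hq'), ?_⟩
      rw [card_insert_of_notMem (by simpa using hne), card_singleton]
    rw [← himgΨ, mem_image] at hpair
    obtain ⟨T, hT, hTeq⟩ := hpair
    have hqT : q ∈ Ψ T := by rw [hTeq]; simp
    have hq'T : q' ∈ Ψ T := by rw [hTeq]; simp
    have hu := hunion T hT q hqT q' hq'T hne
    have hci := card_union_add_card_inter q q'
    rw [hu, hT3 T hT, hUcard2 q hq, hUcard2 q' hq'] at hci
    rw [← card_pos]
    omega
  have hU4 : 4 ≤ U.card := by omega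
  obtain ⟨x, hx⟩ := helly_pairs hUcard2 hUint hU4
  refine ⟨x, ?_⟩
  apply Finset.eq_of_subset_of_card_le
  · intro T hT
    have hTF1 : T ∈ F1 := by rw [hF1F]; exact hT
    have hne : (Ψ T).Nonempty := by
      rw [← card_pos, hΨcard T hTF1]; norm_num
    obtain ⟨q, hq⟩ := hne
    have hxq : x ∈ q := hx q (hΨsubU T hTF1 hq)
    have hqT : q ⊆ T := (hmemΨ T hTF1 q hq).1
    exact mem_filter.mpr ⟨mem_univ T, hF T hT, hqT hxq⟩
  · rw [fullStar_card x (by omega), heq]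

/-- ex(n, A+B+) = C(n-1,2) for n >= 5, and the only extremal family is the full star. -/
theorem ex_ApBp (n : ℕ) (hn : 5 ≤ n) :
    IsGreatest {k : ℕ | ∃ F : Finset (Finset (Fin n)), isTripleSystem F ∧
        ¬ containsConfig F configAp ∧ ¬ containsConfig F configBp ∧ F.card = k}
      ((n - 1).choose 2) ∧
    ∀ F : Finset (Finset (Fin n)), isTripleSystem F →
      ¬ containsConfig F configAp → ¬ containsConfig F configBp →
      F.card = (n - 1).choose 2 →
      ∃ x : Fin n, F = Finset.univ.filter (fun t => t.card = 3 ∧ x ∈ t) := by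
  constructor
  · constructor
    · exact ⟨fullStar ⟨0, by omega⟩, fullStar_triple _, fullStar_Ap_free _,
        fullStar_Bp_free _, fullStar_card _ (by omega)⟩
    · rintro kk ⟨F, hF, hA, hB, rfl⟩
      exact (main_count hn hF hA hB).1
  · intro F hF hA hB heq
    obtain ⟨x, hx⟩ := (main_count hn hF hA hB).2 heq
    exact ⟨x, hx⟩
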